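/- Let λ be a partition of n. The map τ: S(λ) → S(λ'), v_t ↦ v_{t'}, is an isomorphism of A_n(q)-modules, where S(λ) and S(λ') are restricted to the alternating Hecke algebra A_n(q) ⊆ H_n. -/

import Mathlib

open scoped Classical

noncomputable section

/-- The simple transposition swapping `i` and `i+1` (0-indexed; this is the Coxeter
generator `s_{i+1}` in 1-indexed notation) in the symmetric group on `Fin n`. -/
def sTr (n i : ℕ) : Equiv.Perm (Fin n) :=
  if h : i + 1 < n then Equiv.swap ⟨i, Nat.lt_of_succ_lt h⟩ ⟨i + 1, h⟩ else 1

/-- The Coxeter length: the minimal length of an expression of `w` as a product of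
simple transpositions. -/
def len (n : ℕ) (w : Equiv.Perm (Fin n)) : ℕ :=
  sInf {k | ∃ l : List ℕ, l.length = k ∧ (∀ i ∈ l, i + 1 < n) ∧ w = (l.map (sTr n)).prod}

/-- The (strict) Bruhat order on the symmetric group: `y < z` iff `z` can be obtained
from `y` by successively multiplying by reflections, increasing the length at each step. -/
def bruhatLT (n : ℕ) (y z : Equiv.Perm (Fin n)) : Prop :=
  Relation.TransGen
    (fun a b => (∃ u v : Fin n, u ≠ v ∧ b = a * Equiv.swap u v) ∧ len n a < len n b) y z

/-- `y ≺ z` iff `y < z` in the Bruhat order and `ℓ(y) ≢ ℓ(z) (mod 2)`. -/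
def precLT (n : ℕ) (y z : Equiv.Perm (Fin n)) : Prop :=
  bruhatLT n y z ∧ ¬ (len n y % 2 = len n z % 2)

/-- The element `A_z = ½(T_z + ε_z T_z^#)`. -/
def Aelt {R H : Type*} [CommRing R] [Ring H] [Algebra R H] (n : ℕ)
    (T : Equiv.Perm (Fin n) → H) (hash : H ≃ₐ[R] H) (z : Equiv.Perm (Fin n)) : H :=
  Ring.inverse (2 : R) • (T z + ((-1 : R) ^ len n z) • hash (T z))

/-- The `ε`-eigenspace `H^ε = {h ∈ H : h^# = ε h}` of an algebra automorphism,
viewed as an `R`-submodule. -/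
def fixedSubmodule {R H : Type*} [CommRing R] [Ring H] [Algebra R H]
    (φ : H ≃ₐ[R] H) (ε : R) : Submodule R H where
  carrier := {x | φ x = ε • x}
  add_mem' := by
    intro a b ha hb
    simp only [Set.mem_setOf_eq] at *
    rw [map_add, ha, hb, smul_add]
  zero_mem' := by simp
  smul_mem' := by
    intro c a ha
    simp only [Set.mem_setOf_eq] at *
    rw [map_smul, ha, smul_smul, smul_smul, mul_comm]

/-- The quantum integer `[k] = q + q³ + ⋯ + q^{2k−1}` for `k ≥ 0`, and
`[k] = −q⁻¹ − q⁻³ − ⋯ − q^{2k+1}` for `k < 0`. -/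
def qint {F : Type*} [Field F] (q : F) : ℤ → F
  | Int.ofNat k => ∑ j ∈ Finset.range k, q ^ (2 * j + 1)
  | Int.negSucc k => -∑ j ∈ Finset.range (k + 1), (q ^ (2 * j + 1))⁻¹

/-- The coefficients `α_k = √(−1)·√([k+1])·√([k−1])/[k]` for `k > 0`, with
`α_{−k} = −α_k` (and `α_0 = 0`). -/
def alph {F : Type*} [Field F] (q sqm1 : F) (sq : ℕ → F) (m : ℤ) : F :=
  if 0 ≤ m then sqm1 * sq (m.toNat + 1) * sq (m.toNat - 1) / qint q m
  else -(sqm1 * sq ((-m).toNat + 1) * sq ((-m).toNat - 1) / qint q (-m))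

/-- A standard `μ`-tableau, recorded by the positions of its entries: `pos k` is the
cell containing the entry `k+1`.  Standardness means the entries are distinct cells
of `μ` and `t(r,c) < t(s,d)` whenever `(r,c) ≠ (s,d)`, `r ≤ s` and `c ≤ d`. -/
def IsStdTab (μ : YoungDiagram) {n : ℕ} (pos : Fin n → ℕ × ℕ) : Prop :=
  Function.Injective pos ∧ (∀ k, pos k ∈ μ) ∧
    ∀ j k : Fin n, (pos j).1 ≤ (pos k).1 → (pos j).2 ≤ (pos k).2 → pos j ≠ pos k → j < k

/-- The type of standard `μ`-tableaux with `n` entries. -/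
def StdTab (μ : YoungDiagram) (n : ℕ) : Type :=
  {pos : Fin n → ℕ × ℕ // IsStdTab μ pos}

/-- The content `c_t(m+1) = c − r` of the entry `m+1`, located in cell `(r, c)`
(and junk value `0` when `m ≥ n`). -/
def contN {n : ℕ} (pos : Fin n → ℕ × ℕ) (m : ℕ) : ℤ :=
  if h : m < n then ((pos ⟨m, h⟩).2 : ℤ) - ((pos ⟨m, h⟩).1 : ℤ) else 0

/-- The axial distance `ρ_t(i+1) = c_t(i+1) − c_t(i+2)` (0-indexed `i`). -/
def rhoAx {n : ℕ} (pos : Fin n → ℕ × ℕ) (i : ℕ) (hi : i + 1 < n) : ℤ :=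
  (((pos ⟨i, Nat.lt_of_succ_lt hi⟩).2 : ℤ) - ((pos ⟨i, Nat.lt_of_succ_lt hi⟩).1 : ℤ))
    - (((pos ⟨i + 1, hi⟩).2 : ℤ) - ((pos ⟨i + 1, hi⟩).1 : ℤ))

/-- The tableau `t·s_{i+1}`, obtained from `t` by swapping the entries `i+1`, `i+2`. -/
def swapEnt {n : ℕ} (pos : Fin n → ℕ × ℕ) (i : ℕ) (hi : i + 1 < n) : Fin n → ℕ × ℕ :=
  pos ∘ (Equiv.swap ⟨i, Nat.lt_of_succ_lt hi⟩ ⟨i + 1, hi⟩)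

/-- The conjugate of a tableau: the entry in cell `(r,c)` moves to cell `(c,r)`. -/
def conjPos {n : ℕ} (pos : Fin n → ℕ × ℕ) : Fin n → ℕ × ℕ :=
  fun k => ((pos k).2, (pos k).1)

lemma isStdTab_conj {μ : YoungDiagram} {n : ℕ} {pos : Fin n → ℕ × ℕ}
    (h : IsStdTab μ pos) : IsStdTab μ.transpose (conjPos pos) := by
  obtain ⟨hinj, hmem, hord⟩ := h
  refine ⟨?_, ?_, ?_⟩
  · intro a b hab
    apply hinj
    have h1 : ((pos a).2, (pos a).1) = ((pos b).2, (pos b).1) := hab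
    have h2 := congrArg Prod.snd h1
    have h3 := congrArg Prod.fst h1
    simp only at h2 h3
    exact Prod.ext h2 h3
  · intro k
    rw [YoungDiagram.mem_transpose]
    exact hmem k
  · intro j k h1 h2 hne
    refine hord j k h2 h1 ?_
    intro hc
    exact hne (by rw [conjPos, conjPos, hc])

/-- The conjugate standard tableau `t' ∈ Std(μ')` of `t ∈ Std(μ)`. -/
def conjTab {μ : YoungDiagram} {n : ℕ} (t : StdTab μ n) : StdTab μ.transpose n :=
  ⟨conjPos t.val, isStdTab_conj t.prop⟩

/-- The conjugate standard tableau, going from `Std(μ')` back to `Std(μ)`. -/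
def backConjTab {μ : YoungDiagram} {n : ℕ} (s : StdTab μ.transpose n) : StdTab μ n :=
  ⟨conjPos s.val, by
    have h := isStdTab_conj s.prop
    rwa [YoungDiagram.transpose_transpose] at h⟩

/-- The linear map `τ : S(μ') → S(μ)` with `v_s ↦ v_{s'}`. -/
def crossTau (F : Type*) [Field F] (μ : YoungDiagram) (n : ℕ) :
    (StdTab μ.transpose n → F) →ₗ[F] (StdTab μ n → F) where
  toFun f := fun t => f (conjTab t)
  map_add' _ _ := rfl
  map_smul' _ _ := rfl

/-- The linear map `τ : S(μ) → S(μ')` with `v_t ↦ v_{t'}`. -/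
def fwdTau (F : Type*) [Field F] (μ : YoungDiagram) (n : ℕ) :
    (StdTab μ n → F) →ₗ[F] (StdTab μ.transpose n → F) where
  toFun f := fun s => f (backConjTab s)
  map_add' _ _ := rfl
  map_smul' _ _ := rfl

/-- For a self-conjugate shape, the conjugate tableau `t'` of `t`, as a standard
tableau of the same shape. -/
def selfConjTab {μ : YoungDiagram} (hself : μ.transpose = μ) {n : ℕ}
    (t : StdTab μ n) : StdTab μ n :=
  ⟨conjPos t.val, by have h := isStdTab_conj t.prop; rwa [hself] at h⟩

/-- For a self-conjugate shape, the linear involution `τ` of `S(μ)` with `v_t ↦ v_{t'}`. -/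
def selfTau {F : Type*} [Field F] {μ : YoungDiagram} (hself : μ.transpose = μ) (n : ℕ) :
    (StdTab μ n → F) →ₗ[F] (StdTab μ n → F) where
  toFun f := fun t => f (selfConjTab hself t)
  map_add' _ _ := rfl
  map_smul' _ _ := rfl

/-- `act` is the (right) seminormal representation of the Hecke algebra on the Specht
module `S(μ)`, with basis `{v_t}` indexed by the standard `μ`-tableaux, on which the
generators act by `v_t T_i = (−1/[ρ_t(i)]) v_t + α_t(i) v_{t·s_i}`. -/
def SpechtRep {F : Type*} [Field F] (q sqm1 : F) (sq : ℕ → F) (n : ℕ)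
    {H : Type*} [Ring H] [Algebra F H] (T : Equiv.Perm (Fin n) → H)
    (μ : YoungDiagram) (act : H →ₗ[F] Module.End F (StdTab μ n → F)) : Prop :=
  act 1 = 1 ∧ (∀ a b : H, act (a * b) = act b * act a) ∧
    ∀ (i : ℕ) (hi : i + 1 < n) (t : StdTab μ n),
      act (T (sTr n i)) (Pi.single t (1 : F) : StdTab μ n → F) =
        (-(qint q (rhoAx t.val i hi))⁻¹) • (Pi.single t (1 : F) : StdTab μ n → F) +
          (if h : IsStdTab μ (swapEnt t.val i hi) then
            alph q sqm1 sq (rhoAx t.val i hi) •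
              (Pi.single (⟨swapEnt t.val i hi, h⟩ : StdTab μ n) (1 : F) : StdTab μ n → F)
           else 0)


section TauAuxLen

lemma sTr_eq {n i : ℕ} (hi : i + 1 < n) :
    sTr n i = Equiv.swap ⟨i, Nat.lt_of_succ_lt hi⟩ ⟨i + 1, hi⟩ := dif_pos hi

lemma sTr_mul_self (n i : ℕ) : sTr n i * sTr n i = 1 := by
  unfold sTr; split
  · exact Equiv.swap_mul_self _ _
  · exact one_mul 1

lemma sTr_inv (n i : ℕ) : (sTr n i)⁻¹ = sTr n i :=
  inv_eq_of_mul_eq_one_right (sTr_mul_self n i)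

lemma sTr_ne_one {n i : ℕ} (hi : i + 1 < n) : sTr n i ≠ 1 := by
  rw [sTr_eq hi, Ne, Equiv.swap_eq_one_iff]
  intro h
  have := congrArg Fin.val h
  simp at this

lemma word_of_list {n : ℕ} (l : List (Equiv.Perm (Fin n)))
    (hl : ∀ y ∈ l, ∃ i : ℕ, i + 1 < n ∧ y = sTr n i) :
    ∃ l' : List ℕ, (∀ i ∈ l', i + 1 < n) ∧ (l'.map (sTr n)).prod = l.prod := by
  induction l with
  | nil => exact ⟨[], by simp, by simp⟩
  | cons y ys ih =>
    obtain ⟨i, hi, hy⟩ := hl y List.mem_cons_self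
    obtain ⟨l', h1, h2⟩ := ih fun z hz => hl z (List.mem_cons_of_mem _ hz)
    refine ⟨i :: l', ?_, ?_⟩
    · intro j hj
      rcases List.mem_cons.1 hj with rfl | h
      · exact hi
      · exact h1 _ h
    · simp [h2, hy]

lemma exists_word (n : ℕ) (w : Equiv.Perm (Fin n)) :
    ∃ l : List ℕ, (∀ i ∈ l, i + 1 < n) ∧ w = (l.map (sTr n)).prod := by
  cases n with
  | zero =>
    refine ⟨[], by simp, ?_⟩
    simp only [List.map_nil, List.prod_nil]
    exact Equiv.ext fun x => absurd x.2 (by omega)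
  | succ m =>
    have hw : w ∈ Submonoid.closure
        (Set.range fun i : Fin m ↦ Equiv.swap i.castSucc i.succ) := by
      rw [Equiv.Perm.mclosure_swap_castSucc_succ]; trivial
    obtain ⟨l, hl, hprod⟩ := Submonoid.exists_list_of_mem_closure hw
    have hgen : ∀ y ∈ l, ∃ i : ℕ, i + 1 < m + 1 ∧ y = sTr (m + 1) i := by
      intro y hy
      obtain ⟨i, rfl⟩ := hl y hy
      refine ⟨i.val, by omega, ?_⟩
      rw [sTr_eq (by omega : i.val + 1 < m + 1)]
      congr 1 <;> exact Fin.ext rfl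
    obtain ⟨l', h1, h2⟩ := word_of_list l hgen
    exact ⟨l', h1, by rw [h2, hprod]⟩

lemma len_le {n : ℕ} {w : Equiv.Perm (Fin n)} {l : List ℕ}
    (h1 : ∀ i ∈ l, i + 1 < n) (h2 : w = (l.map (sTr n)).prod) :
    len n w ≤ l.length :=
  Nat.sInf_le ⟨l, rfl, h1, h2⟩

lemma exists_min_word (n : ℕ) (w : Equiv.Perm (Fin n)) :
    ∃ l : List ℕ, l.length = len n w ∧ (∀ i ∈ l, i + 1 < n) ∧
      w = (l.map (sTr n)).prod := by
  have hne : {k | ∃ l : List ℕ, l.length = k ∧ (∀ i ∈ l, i + 1 < n) ∧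
      w = (l.map (sTr n)).prod}.Nonempty := by
    obtain ⟨l, h1, h2⟩ := exists_word n w
    exact ⟨l.length, l, rfl, h1, h2⟩
  exact Nat.sInf_mem hne

lemma len_one (n : ℕ) : len n 1 = 0 :=
  Nat.le_zero.1 (len_le (l := []) (by simp) (by simp))

lemma eq_one_of_len_eq_zero {n : ℕ} {w : Equiv.Perm (Fin n)} (h : len n w = 0) :
    w = 1 := by
  obtain ⟨l, hlen, _, hprod⟩ := exists_min_word n w
  rw [h, List.length_eq_zero_iff] at hlen
  subst hlen
  simpa using hprod

lemma len_sTr {n i : ℕ} (hi : i + 1 < n) : len n (sTr n i) = 1 := by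
  have h1 : len n (sTr n i) ≤ 1 := by
    have := len_le (l := [i]) (w := sTr n i) (by simpa) (by simp)
    simpa using this
  have h2 : len n (sTr n i) ≠ 0 := fun h => sTr_ne_one hi (eq_one_of_len_eq_zero h)
  omega

lemma len_mul_sTr_le {n : ℕ} (w : Equiv.Perm (Fin n)) {i : ℕ} (hi : i + 1 < n) :
    len n (w * sTr n i) ≤ len n w + 1 := by
  obtain ⟨l, hlen, h1, h2⟩ := exists_min_word n w
  have := len_le (l := l ++ [i]) (w := w * sTr n i)
    (by intro j hj; rcases List.mem_append.1 hj with h | h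
        · exact h1 j h
        · simpa using (List.mem_singleton.1 h) ▸ hi)
    (by simp [h2])
  simpa [hlen] using this

end TauAuxLen

section TauAuxQint

variable {F : Type*} [Field F]

lemma qint_natCast (q : F) (k : ℕ) :
    qint q (k : ℤ) = ∑ j ∈ Finset.range k, q ^ (2 * j + 1) := rfl

lemma qint_neg_natCast (q : F) {k : ℕ} (hk : 1 ≤ k) :
    qint q (-(k : ℤ)) = -∑ j ∈ Finset.range k, (q ^ (2 * j + 1))⁻¹ := by
  obtain ⟨m, rfl⟩ : ∃ m, k = m + 1 := ⟨k - 1, by omega⟩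
  have : (-(((m + 1 : ℕ)) : ℤ)) = Int.negSucc m := by
    rw [Int.negSucc_eq]; push_cast; ring
  rw [this]
  rfl

lemma qint_neg_eq (q : F) (hq0 : q ≠ 0) {k : ℕ} (hk : 1 ≤ k) :
    qint q (-(k : ℤ)) = -((q ^ (2 * k))⁻¹ * qint q (k : ℤ)) := by
  rw [qint_neg_natCast q hk, qint_natCast, Finset.mul_sum, neg_inj,
    ← Finset.sum_range_reflect (fun j => (q ^ (2 * j + 1))⁻¹) k]
  refine Finset.sum_congr rfl fun j hj => ?_
  have hj' : j < k := Finset.mem_range.1 hj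
  have hpow : q ^ (2 * (k - 1 - j) + 1) * q ^ (2 * j + 1) = q ^ (2 * k) := by
    rw [← pow_add]
    congr 1
    omega
  field_simp
  rw [← hpow]

lemma qint_telescope (q : F) (hq0 : q ≠ 0) (k : ℕ) :
    (q - q⁻¹) * qint q (k : ℤ) = q ^ (2 * k) - 1 := by
  rw [qint_natCast, Finset.mul_sum]
  have : ∀ j ∈ Finset.range k,
      (q - q⁻¹) * q ^ (2 * j + 1) = q ^ (2 * (j + 1)) - q ^ (2 * j) := by
    intro j _
    field_simp
    ring
  rw [Finset.sum_congr rfl this, Finset.sum_range_sub (fun j => q ^ (2 * j))]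
  simp

lemma qint_key (q : F) (hq0 : q ≠ 0) {k : ℕ} (hk1 : 1 ≤ k)
    (hk : qint q (k : ℤ) ≠ 0) :
    qint q (-(k : ℤ)) ≠ 0 ∧
      (qint q (k : ℤ))⁻¹ + (qint q (-(k : ℤ)))⁻¹ = -(q - q⁻¹) := by
  have hqpow : (q : F) ^ (2 * k) ≠ 0 := pow_ne_zero _ hq0
  have hneg := qint_neg_eq q hq0 hk1
  have hne : qint q (-(k : ℤ)) ≠ 0 := by
    rw [hneg]
    simp only [ne_eq, neg_eq_zero, mul_eq_zero, inv_eq_zero, not_or]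
    exact ⟨hqpow, hk⟩
  refine ⟨hne, ?_⟩
  have htel := qint_telescope q hq0 k
  rw [hneg, inv_neg, mul_inv, inv_inv]
  field_simp
  linear_combination q * htel + qint q (k : ℤ) * mul_inv_cancel₀ hq0

lemma alph_neg (q sqm1 : F) (sq : ℕ → F) (hsq0 : sq 0 = 0) (m : ℤ) :
    alph q sqm1 sq (-m) = -alph q sqm1 sq m := by
  rcases lt_trichotomy m 0 with hm | rfl | hm
  · have h1 : (0:ℤ) ≤ -m := by omega
    have h2 : ¬ (0:ℤ) ≤ m := by omega
    simp only [alph, if_pos h1, if_neg h2, neg_neg]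
  · simp [alph, hsq0]
  · have h1 : ¬ (0:ℤ) ≤ -m := by omega
    have h2 : (0:ℤ) ≤ m := by omega
    simp only [alph, if_neg h1, if_pos h2, neg_neg]

end TauAuxQint

section TauAuxTab

lemma stdtab_le {μ : YoungDiagram} {n : ℕ} {pos : Fin n → ℕ × ℕ}
    (h : IsStdTab μ pos) {j k : Fin n} (h1 : (pos j).1 ≤ (pos k).1)
    (h2 : (pos j).2 ≤ (pos k).2) : j ≤ k := by
  by_cases he : pos j = pos k
  · exact (h.1 he).le
  · exact (h.2.2 j k h1 h2 he).le

lemma stdtab_entry {μ : YoungDiagram} {n : ℕ} {pos : Fin n → ℕ × ℕ}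
    (h : IsStdTab μ pos) (hμ : μ.card = n) {p : ℕ × ℕ} (hp : p ∈ μ) :
    ∃ k : Fin n, pos k = p := by
  classical
  let f : Fin n → {x // x ∈ μ.cells} := fun k => ⟨pos k, (YoungDiagram.mem_cells _).2 (h.2.1 k)⟩
  have hinj : Function.Injective f := fun a b hab => h.1 (Subtype.ext_iff.1 hab)
  have hbij : Function.Bijective f := by
    rw [Fintype.bijective_iff_injective_and_card]
    refine ⟨hinj, ?_⟩
    rw [Fintype.card_coe, Fintype.card_fin]
    exact hμ.symm ▸ rfl
  obtain ⟨k, hk⟩ := hbij.2 ⟨p, (YoungDiagram.mem_cells _).2 hp⟩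
  exact ⟨k, Subtype.ext_iff.1 hk⟩

lemma cells_count {μ : YoungDiagram} {n : ℕ} {pos : Fin n → ℕ × ℕ}
    (h : IsStdTab μ pos) (hμ : μ.card = n) (m b : ℕ) (g : ℕ → ℕ × ℕ)
    (hginj : ∀ j < m, ∀ j' < m, g j = g j' → j = j')
    (hgmem : ∀ j < m, g j ∈ μ)
    (hgle : ∀ j < m, ∃ k : Fin n, (g j).1 ≤ (pos k).1 ∧ (g j).2 ≤ (pos k).2 ∧ k.val < b) :
    m ≤ b := by
  classical
  have key : ∀ j, j < m → ∃ e : Fin n, pos e = g j := fun j hj => stdtab_entry h hμ (hgmem j hj)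
  rcases Nat.eq_zero_or_pos m with rfl | hm
  · exact Nat.zero_le b
  have hn : 0 < n := by
    obtain ⟨e, _⟩ := key 0 hm
    exact Nat.pos_of_ne_zero fun h0 => absurd e.2 (by omega)
  set E : ℕ → Fin n := fun j => if hj : j < m then (key j hj).choose else ⟨0, hn⟩ with hE
  have hEspec : ∀ j, j < m → pos (E j) = g j := by
    intro j hj
    simp only [hE, dif_pos hj]
    exact (key j hj).choose_spec
  have := Finset.card_le_card_of_injOn (s := Finset.range m) (t := Finset.range b)
    (fun j => (E j).val)
    (fun j hj => by
      simp only [Finset.mem_coe, Finset.mem_range] at hj ⊢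
      obtain ⟨k, hk1, hk2, hk3⟩ := hgle j hj
      have : E j ≤ k := stdtab_le h (by rw [hEspec j hj]; exact hk1) (by rw [hEspec j hj]; exact hk2)
      omega)
    (fun j hj j' hj' hjj => by
      simp only [Finset.coe_range, Set.mem_Iio] at hj hj'
      have : E j = E j' := Fin.ext hjj
      exact hginj j hj j' hj' (by rw [← hEspec j hj, ← hEspec j' hj', this]))
  simpa using this

lemma rho_bound {μ : YoungDiagram} {n : ℕ} {pos : Fin n → ℕ × ℕ}
    (h : IsStdTab μ pos) (hμ : μ.card = n) {i : ℕ} (hi : i + 1 < n) :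
    rhoAx pos i hi ≤ n := by
  set I : Fin n := ⟨i, Nat.lt_of_succ_lt hi⟩ with hI
  set J : Fin n := ⟨i + 1, hi⟩ with hJ
  set r1 := (pos I).1 with hr1
  set c1 := (pos I).2 with hc1
  set r2 := (pos J).1 with hr2
  set c2 := (pos J).2 with hc2
  have hIJ : pos I ∈ μ ∧ pos J ∈ μ := ⟨h.2.1 I, h.2.1 J⟩
  have hrho : rhoAx pos i hi = (c1 : ℤ) - r1 - ((c2 : ℤ) - r2) := rfl
  rcases le_or_gt c1 c2 with hc | hc
  · -- column count: r2 + 1 ≤ i + 2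
    have hcount : r2 + 1 ≤ i + 2 := by
      refine cells_count h hμ (r2 + 1) (i + 2) (fun a => (a, c2)) ?_ ?_ ?_
      · intro j _ j' _ hjj
        exact congrArg Prod.fst hjj
      · intro j hj
        exact μ.up_left_mem (show j ≤ r2 by omega) le_rfl
          (show (r2, c2) ∈ μ by rw [hr2, hc2, Prod.mk.eta]; exact hIJ.2)
      · intro j hj
        refine ⟨J, ?_, ?_, ?_⟩
        · show j ≤ (pos J).1
          rw [← hr2]; omega
        · show c2 ≤ (pos J).2
          rw [← hc2]
        · show i + 1 < i + 2
          omega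
    rw [hrho]; omega
  rcases le_or_gt r2 r1 with hr | hr
  · -- row count: c1 + 1 ≤ i + 1
    have hcount : c1 + 1 ≤ i + 1 := by
      refine cells_count h hμ (c1 + 1) (i + 1) (fun b => (r1, b)) ?_ ?_ ?_
      · intro j _ j' _ hjj
        exact congrArg Prod.snd hjj
      · intro j hj
        exact μ.up_left_mem le_rfl (show j ≤ c1 by omega)
          (show (r1, c1) ∈ μ by rw [hr1, hc1, Prod.mk.eta]; exact hIJ.1)
      · intro j hj
        refine ⟨I, ?_, ?_, ?_⟩
        · show r1 ≤ (pos I).1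
          rw [← hr1]
        · show j ≤ (pos I).2
          rw [← hc1]; omega
        · show i < i + 1
          omega
    rw [hrho]; omega
  · -- L-shape: (c1 - c2) + (r2 - r1) + 1 ≤ i + 2
    set d := c1 - c2 with hd
    set e := r2 - r1 with he
    have hcount : d + e + 1 ≤ i + 2 := by
      refine cells_count h hμ (d + e + 1) (i + 2)
        (fun j => if j ≤ d then (r1, c2 + j) else (r1 + (j - d), c2)) ?_ ?_ ?_
      · intro j hj j' hj' hjj
        by_cases h1 : j ≤ d <;> by_cases h2 : j' ≤ d <;>
          simp only [h1, h2, if_pos, if_neg, if_true, if_false, Prod.mk.injEq] at hjj <;>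
          omega
      · intro j hj
        show (if j ≤ d then (r1, c2 + j) else (r1 + (j - d), c2)) ∈ μ
        by_cases h1 : j ≤ d
        · rw [if_pos h1]
          exact μ.up_left_mem le_rfl (show c2 + j ≤ c1 by omega)
            (show (r1, c1) ∈ μ by rw [hr1, hc1, Prod.mk.eta]; exact hIJ.1)
        · rw [if_neg h1]
          exact μ.up_left_mem (show r1 + (j - d) ≤ r2 by omega) le_rfl
            (show (r2, c2) ∈ μ by rw [hr2, hc2, Prod.mk.eta]; exact hIJ.2)
      · intro j hj
        by_cases h1 : j ≤ d
        · refine ⟨I, ?_, ?_, ?_⟩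
          · show (if j ≤ d then (r1, c2 + j) else (r1 + (j - d), c2)).1 ≤ (pos I).1
            rw [if_pos h1, ← hr1]
          · show (if j ≤ d then (r1, c2 + j) else (r1 + (j - d), c2)).2 ≤ (pos I).2
            rw [if_pos h1, ← hc1]; show c2 + j ≤ c1; omega
          · show i < i + 2
            omega
        · refine ⟨J, ?_, ?_, ?_⟩
          · show (if j ≤ d then (r1, c2 + j) else (r1 + (j - d), c2)).1 ≤ (pos J).1
            rw [if_neg h1, ← hr2]; show r1 + (j - d) ≤ r2; omega
          · show (if j ≤ d then (r1, c2 + j) else (r1 + (j - d), c2)).2 ≤ (pos J).2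
            rw [if_neg h1, ← hc2]
          · show i + 1 < i + 2
            omega
    rw [hrho]; omega

lemma rho_ne_zero {μ : YoungDiagram} {n : ℕ} {pos : Fin n → ℕ × ℕ}
    (h : IsStdTab μ pos) (hμ : μ.card = n) {i : ℕ} (hi : i + 1 < n) :
    rhoAx pos i hi ≠ 0 := by
  set I : Fin n := ⟨i, Nat.lt_of_succ_lt hi⟩ with hI
  set J : Fin n := ⟨i + 1, hi⟩ with hJ
  set r1 := (pos I).1 with hr1
  set c1 := (pos I).2 with hc1
  set r2 := (pos J).1 with hr2
  set c2 := (pos J).2 with hc2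
  have hrho : rhoAx pos i hi = (c1 : ℤ) - r1 - ((c2 : ℤ) - r2) := rfl
  intro h0
  rw [hrho] at h0
  rcases lt_trichotomy r1 r2 with hr | hr | hr
  · have hcc : c1 < c2 := by omega
    have hmem : ((r1, c2) : ℕ × ℕ) ∈ μ :=
      μ.up_left_mem (show r1 ≤ r2 by omega) le_rfl
        (show (r2, c2) ∈ μ by rw [hr2, hc2, Prod.mk.eta]; exact h.2.1 J)
    obtain ⟨k, hk⟩ := stdtab_entry h hμ hmem
    have h1 : I < k := h.2.2 I k (by rw [hk, ← hr1]) (by rw [hk, ← hc1]; omega)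
      (by rw [hk]; intro hc; have := congrArg Prod.snd hc; simp at this; omega)
    have h2 : k < J := h.2.2 k J (by rw [hk, ← hr2]; omega) (by rw [hk, ← hc2])
      (by rw [hk]; intro hc; have := congrArg Prod.fst hc; simp at this; omega)
    rw [hI] at h1; rw [hJ] at h2
    have := h1
    have hkv1 : i < k.val := h1
    have hkv2 : k.val < i + 1 := h2
    omega
  · have hcc : c1 = c2 := by omega
    have : pos I = pos J := by
      rw [← Prod.mk.eta (p := pos I), ← Prod.mk.eta (p := pos J), ← hr1, ← hc1, ← hr2, ← hc2, hr, hcc]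
    have := h.1 this
    rw [hI, hJ] at this
    have := congrArg Fin.val this
    simp at this
  · have hcc : c2 < c1 := by omega
    have hmem : ((r2, c1) : ℕ × ℕ) ∈ μ :=
      μ.up_left_mem (show r2 ≤ r1 by omega) le_rfl
        (show (r1, c1) ∈ μ by rw [hr1, hc1, Prod.mk.eta]; exact h.2.1 I)
    obtain ⟨k, hk⟩ := stdtab_entry h hμ hmem
    have h1 : J < k := h.2.2 J k (by rw [hk, ← hr2]) (by rw [hk, ← hc2]; omega)
      (by rw [hk]; intro hc; have := congrArg Prod.snd hc; simp at this; omega)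
    have h2 : k < I := h.2.2 k I (by rw [hk, ← hr1]; omega) (by rw [hk, ← hc1])
      (by rw [hk]; intro hc; have := congrArg Prod.fst hc; simp at this; omega)
    rw [hJ] at h1; rw [hI] at h2
    have hkv1 : i + 1 < k.val := h1
    have hkv2 : k.val < i := h2
    omega

end TauAuxTab

section TauAuxConj

variable {μ : YoungDiagram} {n : ℕ}

lemma conjPos_conjPos (pos : Fin n → ℕ × ℕ) : conjPos (conjPos pos) = pos := rfl

lemma backConjTab_conjTab (t : StdTab μ n) : backConjTab (conjTab t) = t :=
  Subtype.ext rfl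

lemma conjTab_backConjTab (s : StdTab μ.transpose n) : conjTab (backConjTab s) = s :=
  Subtype.ext rfl

lemma rhoAx_conj (pos : Fin n → ℕ × ℕ) (i : ℕ) (hi : i + 1 < n) :
    rhoAx (conjPos pos) i hi = -(rhoAx pos i hi) := by
  unfold rhoAx conjPos
  ring

lemma swapEnt_conj (pos : Fin n → ℕ × ℕ) (i : ℕ) (hi : i + 1 < n) :
    swapEnt (conjPos pos) i hi = conjPos (swapEnt pos i hi) := rfl

lemma std_swap_iff (pos : Fin n → ℕ × ℕ) (i : ℕ) (hi : i + 1 < n) :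
    IsStdTab μ.transpose (swapEnt (conjPos pos) i hi) ↔ IsStdTab μ (swapEnt pos i hi) := by
  constructor
  · intro h
    have := isStdTab_conj h
    rw [YoungDiagram.transpose_transpose, swapEnt_conj, conjPos_conjPos] at this
    exact this
  · intro h
    have := isStdTab_conj h
    rw [← swapEnt_conj] at this
    exact this

instance finite_stdTab : Finite (StdTab μ n) := by
  refine Finite.of_injective
    (fun t => (fun k => (⟨t.val k, (YoungDiagram.mem_cells _).2 (t.prop.2.1 k)⟩ :
      {p // p ∈ μ.cells})) : StdTab μ n → Fin n → {p // p ∈ μ.cells}) ?_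
  intro a b hab
  apply Subtype.ext
  funext k
  exact Subtype.ext_iff.1 (congrFun hab k)

lemma card_transpose (μ : YoungDiagram) : μ.transpose.card = μ.card := by
  show ((Equiv.prodComm ℕ ℕ).finsetCongr μ.cells).card = μ.cells.card
  rw [Equiv.finsetCongr_apply, Finset.card_map]

lemma fwdTau_single {F : Type*} [Field F] (t : StdTab μ n) :
    fwdTau F μ n (Pi.single t (1 : F)) = Pi.single (conjTab t) (1 : F) := by
  classical
  funext s
  have h0 : fwdTau F μ n (Pi.single t (1 : F)) s
      = (Pi.single t (1 : F) : StdTab μ n → F) (backConjTab s) := rfl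
  rw [h0, Pi.single_apply, Pi.single_apply]
  congr 1
  simp only [eq_iff_iff]
  constructor
  · intro h
    rw [← conjTab_backConjTab s, h]
  · intro h
    rw [h, backConjTab_conjTab]

end TauAuxConj

/-- Corollary `ConjugateIso`: the map `τ : S(λ) → S(λ')`, `v_t ↦ v_{t'}`,
is an isomorphism of `𝒜ₙ(q)`-modules, where both Specht modules are restricted to the
alternating Hecke algebra `𝒜ₙ(q) = {a ∈ H : a^# = a}`. -/
theorem tau_isomorphism_of_alternating_modules
    {F : Type*} [Field F] (q : F) (hq0 : q ≠ 0) (hq1 : q ≠ 1) (n : ℕ)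
    (hqint : ∀ k : ℕ, 1 ≤ k → k ≤ n → qint q (k : ℤ) ≠ 0)
    -- the chosen square roots √(−1) and √([k]) in F
    (sqm1 : F) (hsqm1 : sqm1 ^ 2 = -1)
    (sq : ℕ → F) (hsq0 : sq 0 = 0)
    (hsq : ∀ k : ℕ, 1 ≤ k → k ≤ n → sq k ^ 2 = qint q (k : ℤ))
    {H : Type*} [Ring H] [Algebra F H]
    -- the Iwahori–Hecke algebra of type A with its basis of standard elements T_w
    (T : Equiv.Perm (Fin n) → H)
    (bT : Module.Basis (Equiv.Perm (Fin n)) F H) (hbT : ∀ w, bT w = T w)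
    (hT1 : T 1 = 1)
    (hTunit : ∀ w, IsUnit (T w))
    (hmul1 : ∀ (w : Equiv.Perm (Fin n)) (i : ℕ), i + 1 < n →
      len n (w * sTr n i) = len n w + 1 → T w * T (sTr n i) = T (w * sTr n i))
    (hmul2 : ∀ (w : Equiv.Perm (Fin n)) (i : ℕ), i + 1 < n →
      len n (w * sTr n i) + 1 = len n w →
      T w * T (sTr n i) = T (w * sTr n i) + (q - q⁻¹) • T w)
    -- the hash involution
    (hash : H ≃ₐ[F] H)
    (hhash : ∀ w, hash (T w) = ((-1 : F) ^ len n w) • Ring.inverse (T w⁻¹))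
    -- the seminormal Specht modules S(λ) and S(λ')
    (μ : YoungDiagram) (hμ : μ.card = n)
    (act : H →ₗ[F] Module.End F (StdTab μ n → F))
    (hact : SpechtRep q sqm1 sq n T μ act)
    (act' : H →ₗ[F] Module.End F (StdTab μ.transpose n → F))
    (hact' : SpechtRep q sqm1 sq n T μ.transpose act') :
    Function.Bijective (fwdTau F μ n) ∧
      ∀ a : H, hash a = a → ∀ f : StdTab μ n → F,
        fwdTau F μ n (act a f) = act' a (fwdTau F μ n f) := by
  classical
  have hμ' : μ.transpose.card = n := by rw [card_transpose]; exact hμ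
  -- hash on generators
  have hashGen : ∀ (i : ℕ), i + 1 < n →
      hash (T (sTr n i)) = (q - q⁻¹) • (1 : H) - T (sTr n i) := by
    intro i hi
    have hss := sTr_mul_self n i
    have hlen : len n (sTr n i * sTr n i) + 1 = len n (sTr n i) := by
      rw [hss, len_one, len_sTr hi]
    have hsq2 : T (sTr n i) * T (sTr n i) = (1 : H) + (q - q⁻¹) • T (sTr n i) := by
      have := hmul2 (sTr n i) i hi hlen
      rwa [hss, hT1] at this
    set u : H := T (sTr n i) - (q - q⁻¹) • (1 : H) with hu
    have h1 : T (sTr n i) * u = 1 := by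
      rw [hu, mul_sub, hsq2, mul_smul_comm, mul_one, add_sub_cancel_right]
    have h2 : u * T (sTr n i) = 1 := by
      rw [hu, sub_mul, hsq2, smul_mul_assoc, one_mul, add_sub_cancel_right]
    have hinv : Ring.inverse (T (sTr n i)) = u :=
      Ring.inverse_unit (⟨T (sTr n i), u, h1, h2⟩ : Hˣ)
    rw [hhash, sTr_inv, len_sTr hi, hinv, pow_one, neg_smul, one_smul, hu, neg_sub]
  -- the generator intertwining relation
  have hgen : ∀ (i : ℕ) (hi : i + 1 < n),
      (fwdTau F μ n).comp (act (T (sTr n i)) : (StdTab μ n → F) →ₗ[F] (StdTab μ n → F)) =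
        (act' (hash (T (sTr n i))) :
          (StdTab μ.transpose n → F) →ₗ[F] (StdTab μ.transpose n → F)).comp (fwdTau F μ n) := by
    intro i hi
    apply LinearMap.pi_ext
    intro t x
    have hx : (Pi.single t x : StdTab μ n → F)
        = x • (Pi.single t (1 : F) : StdTab μ n → F) := by
      rw [← Pi.single_smul, smul_eq_mul, mul_one]
    rw [hx]
    simp only [LinearMap.comp_apply, map_smul]
    congr 1
    -- core computation on the basis vector v_t
    have hstd := t.prop
    have hρ0 : rhoAx t.val i hi ≠ 0 := rho_ne_zero hstd hμ hi
    have hρn : rhoAx t.val i hi ≤ (n : ℤ) := rho_bound hstd hμ hi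
    have hρn' : -(rhoAx t.val i hi) ≤ (n : ℤ) := by
      have := rho_bound (isStdTab_conj hstd) hμ' hi
      rwa [rhoAx_conj] at this
    obtain ⟨hA, hB, hid⟩ :
        qint q (rhoAx t.val i hi) ≠ 0 ∧ qint q (-(rhoAx t.val i hi)) ≠ 0 ∧
          (qint q (-(rhoAx t.val i hi)))⁻¹ + (q - q⁻¹)
            = -(qint q (rhoAx t.val i hi))⁻¹ := by
      rcases lt_or_gt_of_ne hρ0 with hneg | hpos
      · have hρk : rhoAx t.val i hi = -(((-(rhoAx t.val i hi)).toNat : ℕ) : ℤ) := by omega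
        set k : ℕ := (-(rhoAx t.val i hi)).toNat with hk
        have hk1 : 1 ≤ k := by omega
        have hkn : k ≤ n := by omega
        obtain ⟨hne, hsum⟩ := qint_key q hq0 hk1 (hqint k hk1 hkn)
        refine ⟨by rw [hρk]; exact hne, by rw [hρk, neg_neg]; exact hqint k hk1 hkn, ?_⟩
        rw [hρk, neg_neg]
        linear_combination hsum
      · have hρk : rhoAx t.val i hi = (((rhoAx t.val i hi).toNat : ℕ) : ℤ) := by omega
        set k : ℕ := (rhoAx t.val i hi).toNat with hk
        have hk1 : 1 ≤ k := by omega
        have hkn : k ≤ n := by omega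
        obtain ⟨hne, hsum⟩ := qint_key q hq0 hk1 (hqint k hk1 hkn)
        refine ⟨by rw [hρk]; exact hqint k hk1 hkn, by rw [hρk]; exact hne, ?_⟩
        rw [hρk]
        linear_combination hsum
      
    have hρ' : rhoAx (conjTab t).val i hi = -(rhoAx t.val i hi) := rhoAx_conj t.val i hi
    have e1 := hact.2.2 i hi t
    have e2 := hact'.2.2 i hi (conjTab t)
    rw [hρ'] at e2
    rw [e1, hashGen i hi]
    rw [map_add, map_smul, fwdTau_single, map_sub, map_smul, hact'.1]
    rw [LinearMap.sub_apply, LinearMap.smul_apply, Module.End.one_apply, e2]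
    by_cases hsw : IsStdTab μ (swapEnt t.val i hi)
    · have hsw' : IsStdTab μ.transpose (swapEnt (conjTab t).val i hi) :=
        (std_swap_iff t.val i hi).2 hsw
      rw [dif_pos hsw, dif_pos hsw']
      have htab : (⟨swapEnt (conjTab t).val i hi, hsw'⟩ : StdTab μ.transpose n)
          = conjTab (⟨swapEnt t.val i hi, hsw⟩ : StdTab μ n) := Subtype.ext rfl
      rw [htab, map_smul]
      erw [fwdTau_single]
      rw [alph_neg q sqm1 sq hsq0, ← hid]
      module
    · have hsw' : ¬ IsStdTab μ.transpose (swapEnt (conjTab t).val i hi) :=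
        fun h => hsw ((std_swap_iff t.val i hi).1 h)
      rw [dif_neg hsw, dif_neg hsw', map_zero, ← hid]
      module
  -- the relation for arbitrary basis elements T_w, by induction on length
  have hword : ∀ (m : ℕ) (w : Equiv.Perm (Fin n)), len n w = m →
      (fwdTau F μ n).comp (act (T w) : (StdTab μ n → F) →ₗ[F] (StdTab μ n → F)) =
        (act' (hash (T w)) :
          (StdTab μ.transpose n → F) →ₗ[F] (StdTab μ.transpose n → F)).comp (fwdTau F μ n) := by
    intro m
    induction m using Nat.strong_induction_on with
    | _ m ih =>
      intro w hwlen
      obtain ⟨l, hlen, hmem, hprod⟩ := exists_min_word n w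
      rcases List.eq_nil_or_concat l with rfl | ⟨l', a, rfl⟩
      · have hw1 : w = 1 := by simpa using hprod
        subst hw1
        rw [hT1, hact.1, map_one, hact'.1]
        rfl
      · have ha : a + 1 < n := hmem a (by simp)
        have hmem' : ∀ j ∈ l', j + 1 < n := fun j hj => hmem j (by simp [hj])
        set w' : Equiv.Perm (Fin n) := ((l'.map (sTr n)).prod) with hw'
        have hwdec : w = w' * sTr n a := by
          rw [hprod, hw', List.concat_eq_append, List.map_append, List.prod_append]
          simp
        have hlw' : len n w' ≤ l'.length := len_le hmem' rfl
        have hlen' : l'.length + 1 = m := by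
          rw [← hwlen, ← hlen, List.concat_eq_append, List.length_append]
          simp
        have hup : len n w ≤ len n w' + 1 := by
          rw [hwdec]; exact len_mul_sTr_le w' ha
        have hw'len : len n w' = m - 1 := by omega
        have hmullen : len n (w' * sTr n a) = len n w' + 1 := by
          rw [← hwdec, hwlen, hw'len]; omega
        have hTprod : T w' * T (sTr n a) = T w := by
          rw [hmul1 w' a ha hmullen, ← hwdec]
        have ihw' := ih (m - 1) (by omega) w' hw'len
        have ihs := hgen a ha
        rw [← hTprod, hact.2.1, map_mul, hact'.2.1]
        calc (fwdTau F μ n).comp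
              ((act (T (sTr n a)) * act (T w') : Module.End F (StdTab μ n → F)) :
                (StdTab μ n → F) →ₗ[F] (StdTab μ n → F))
            = ((fwdTau F μ n).comp (act (T (sTr n a)))).comp (act (T w')) := by
              rw [Module.End.mul_eq_comp, LinearMap.comp_assoc]
          _ = ((act' (hash (T (sTr n a)))).comp (fwdTau F μ n)).comp (act (T w')) := by
              rw [ihs]
          _ = (act' (hash (T (sTr n a)))).comp ((fwdTau F μ n).comp (act (T w'))) := by
              rw [LinearMap.comp_assoc]
          _ = (act' (hash (T (sTr n a)))).comp
                ((act' (hash (T w'))).comp (fwdTau F μ n)) := by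
              rw [ihw']
          _ = ((act' (hash (T (sTr n a))) * act' (hash (T w')) :
                Module.End F (StdTab μ.transpose n → F)) :
                (StdTab μ.transpose n → F) →ₗ[F] (StdTab μ.transpose n → F)).comp
                (fwdTau F μ n) := by
              rw [Module.End.mul_eq_comp, LinearMap.comp_assoc]
  -- extend to the whole algebra by linearity
  have hall : ∀ a : H,
      (fwdTau F μ n).comp (act a : (StdTab μ n → F) →ₗ[F] (StdTab μ n → F)) =
        (act' (hash a) :
          (StdTab μ.transpose n → F) →ₗ[F] (StdTab μ.transpose n → F)).comp (fwdTau F μ n) := by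
    intro a
    have hmem : a ∈ Submodule.span F (Set.range bT) := by
      rw [bT.span_eq]; trivial
    induction hmem using Submodule.span_induction with
    | mem x hx =>
      obtain ⟨w, rfl⟩ := hx
      rw [hbT]
      exact hword (len n w) w rfl
    | zero =>
      simp only [map_zero]
      rw [LinearMap.comp_zero, LinearMap.zero_comp]
    | add x y hx hy ihx ihy =>
      simp only [map_add]
      rw [LinearMap.comp_add, LinearMap.add_comp, ihx, ihy]
    | smul c x hx ihx =>
      simp only [map_smul]
      rw [LinearMap.comp_smul, LinearMap.smul_comp, ihx]
  constructor
  · refine Function.bijective_iff_has_inverse.2 ⟨crossTau F μ n, ?_, ?_⟩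
    · intro f
      funext t
      have h0 : crossTau F μ n (fwdTau F μ n f) t = f (backConjTab (conjTab t)) := rfl
      rw [h0, backConjTab_conjTab]
    · intro f
      funext s
      have h0 : fwdTau F μ n (crossTau F μ n f) s = f (conjTab (backConjTab s)) := rfl
      rw [h0, conjTab_backConjTab]
  · intro a ha f
    have hc := hall a
    rw [ha] at hc
    exact LinearMap.congr_fun hc f

end
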